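/- Let w be an infinite partial word with infinitely many holes over an alphabet of size k ≥ 2. Then the number of non-recurrent subwords d_w(n) = p_w(n) − r_w(n) is either identically zero or unbounded. -/

import Mathlib

open Set

variable {A : Type*}

/-- The full word `u` occurs at position `i` in the partial word `w`
(`none` is the hole symbol, compatible with every letter). -/
def Occurs (w : ℕ → Option A) (u : List A) (i : ℕ) : Prop :=
  ∀ j : Fin u.length, w (i + (j : ℕ)) = none ∨ w (i + (j : ℕ)) = some (u.get j)

/-- `u` is a subword of `w`: it occurs at some position. -/
def IsSubword (w : ℕ → Option A) (u : List A) : Prop :=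
  ∃ i, Occurs w u i

/-- `u` is a recurrent subword of `w`: it occurs at infinitely many positions. -/
def IsRecSubword (w : ℕ → Option A) (u : List A) : Prop :=
  {i | Occurs w u i}.Infinite

/-- Subword complexity: number of distinct full words of length `n`
that are subwords of `w`. -/
noncomputable def pcomp (w : ℕ → Option A) (n : ℕ) : ℕ :=
  {u : List A | u.length = n ∧ IsSubword w u}.ncard

/-- Number of recurrent subwords of length `n`. -/
noncomputable def rcomp (w : ℕ → Option A) (n : ℕ) : ℕ :=
  {u : List A | u.length = n ∧ IsRecSubword w u}.ncard

/-- `w` is recurrent: every subword occurs infinitely often. -/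
def Recurrent (w : ℕ → Option A) : Prop :=
  ∀ u : List A, IsSubword w u → IsRecSubword w u

/-- `w` is ultimately recurrent: some shift of `w` is recurrent. -/
def UltimatelyRecurrent (w : ℕ → Option A) : Prop :=
  ∃ p, Recurrent (fun i => w (i + p))

/-- `c` is a completion of `w`: it agrees with `w` at every non-hole position. -/
def IsCompletion (w : ℕ → Option A) (c : ℕ → A) : Prop :=
  ∀ i, ∀ a : A, w i = some a → c i = a

/-- `w` is uniformly recurrent: for every subword `u` there is a window size `m`
such that every factor of `w` of length `m` contains an occurrence of `u`. -/
def UniformlyRecurrent (w : ℕ → Option A) : Prop :=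
  ∀ u : List A, IsSubword w u →
    ∃ m, ∀ i, ∃ j, i ≤ j ∧ j + u.length ≤ i + m ∧ Occurs w u j

/-- Every factor of `w` of length `m` contains every length-`n` subword of `w`. -/
def GoodWindow (w : ℕ → Option A) (n m : ℕ) : Prop :=
  ∀ u : List A, u.length = n → IsSubword w u →
    ∀ i, ∃ j, i ≤ j ∧ j + n ≤ i + m ∧ Occurs w u j

/-- The recurrence function `R_w(n)`: the least window size `m` such that every
factor of length `m` contains every subword of length `n`. -/
noncomputable def Rfun (w : ℕ → Option A) (n : ℕ) : ℕ :=
  sInf {m | GoodWindow w n m}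

/-- `w` is ultimately periodic: from some position on, `w` is compatible with a
periodic sequence of letters. -/
def UltimatelyPeriodic (w : ℕ → Option A) : Prop :=
  ∃ N p, 0 < p ∧ ∃ a : ℕ → A, ∀ i, N ≤ i → w i = none ∨ w i = some (a (i % p))

lemma recSub_isSub {A : Type*} (w : ℕ → Option A) (u : List A)
    (h : IsRecSubword w u) : IsSubword w u := h.nonempty

theorem stmt17 [Fintype A] (hk : 2 ≤ Fintype.card A) (w : ℕ → Option A)
    (hinf : {i | w i = none}.Infinite) :
    (∀ n, pcomp w n - rcomp w n = 0) ∨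
      (∀ C, ∃ n, C < pcomp w n - rcomp w n) := by
  by_cases hrec : ∀ u : List A, IsSubword w u → IsRecSubword w u
  · left
    intro n
    have : pcomp w n = rcomp w n := by
      unfold pcomp rcomp
      congr 1
      ext u
      exact and_congr_right fun _ => ⟨hrec u, recSub_isSub w u⟩
    omega
  · right
    push_neg at hrec
    obtain ⟨u₀, hu₀sub, hu₀nr⟩ := hrec
    obtain ⟨i₀, hocc⟩ := hu₀sub
    set n₀ := u₀.length with hn₀
    obtain ⟨b₀, b₁, hb⟩ := Fintype.exists_pair_of_one_lt_card (α := A) (by omega)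
    intro C
    obtain ⟨H, hHsub, hHcard⟩ :=
      ((hinf.diff (Set.finite_Iio (i₀ + n₀))).exists_subset_card_eq (C + 1))
    have hHne : H.Nonempty := Finset.card_pos.mp (by omega)
    set M := H.max' hHne with hM
    have hMmem : M ∈ H := H.max'_mem hHne
    have hHhole : ∀ j ∈ H, w j = none ∧ i₀ + n₀ ≤ j := by
      intro j hj
      obtain ⟨h1, h2⟩ := hHsub hj
      exact ⟨h1, not_lt.mp h2⟩
    set m := M + 1 - i₀ with hm
    have hMge : i₀ + n₀ ≤ M := (hHhole M hMmem).2
    have hmn : n₀ < m := by omega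
    classical
    set f : ℕ → ℕ → A := fun j p =>
      if h : p < n₀ then u₀.get ⟨p, h⟩
      else if i₀ + p = j then b₁
      else (w (i₀ + p)).getD b₀ with hf
    set v : ℕ → List A := fun j => List.ofFn (fun p : Fin m => f j p) with hv
    have hvlen : ∀ j, (v j).length = m := fun j => List.length_ofFn
    have hvget : ∀ j, ∀ q : Fin (v j).length, (v j).get q = f j q := by
      intro j q
      simp [hv, List.get_ofFn]
    -- each v j occurs at i₀
    have hvocc : ∀ j ∈ H, Occurs w (v j) i₀ := by
      intro j hj q
      have hq : (q : ℕ) < m := lt_of_lt_of_eq q.2 (hvlen j)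
      rcases Classical.em (w (i₀ + (q : ℕ)) = none) with hnone | hsome
      · exact Or.inl hnone
      · right
        rw [hvget j q]
        simp only [hf]
        by_cases hq0 : (q : ℕ) < n₀
        · rw [dif_pos hq0]
          rcases hocc ⟨q, hq0⟩ with h | h
          · exact absurd h hsome
          · exact h
        · rw [dif_neg hq0]
          have hne : ¬ i₀ + (q : ℕ) = j := by
            intro he
            apply hsome
            rw [he]
            exact (hHhole j hj).1
          rw [if_neg hne]
          obtain ⟨a, ha⟩ := Option.ne_none_iff_exists'.mp hsome
          rw [ha]; rfl
    -- occurrences of v j give occurrences of u₀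
    have hpref : ∀ j i, Occurs w (v j) i → Occurs w u₀ i := by
      intro j i hoc q
      have hq : (q : ℕ) < m := lt_of_lt_of_le q.2 (le_of_lt hmn)
      rcases hoc ⟨(q : ℕ), by rw [hvlen]; exact hq⟩ with h | h
      · exact Or.inl h
      · right
        rw [h]
        congr 1
        rw [hvget j ⟨(q : ℕ), by rw [hvlen]; exact hq⟩]
        simp only [hf]
        rw [dif_pos q.2]
    have hvnr : ∀ j ∈ H, ¬ IsRecSubword w (v j) := by
      intro j _ hr
      exact hu₀nr (hr.mono fun i hi => hpref j i hi)
    have hvinj : Set.InjOn v ↑H := by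
      intro j hj j' hj' he
      by_contra hne
      have hjm : j ≤ M := H.le_max' j hj
      have hjge := (hHhole j hj).2
      have hp : j - i₀ < m := by omega
      have hii : i₀ + (j - i₀) = j := by omega
      simp only [hv] at he
      have hfe := congrFun (List.ofFn_injective he) ⟨j - i₀, hp⟩
      simp only at hfe
      have e1 : f j (j - i₀) = b₁ := by
        simp only [hf]
        rw [dif_neg (show ¬ j - i₀ < n₀ by omega), if_pos hii]
      have e2 : f j' (j - i₀) = b₀ := by
        simp only [hf]
        rw [dif_neg (show ¬ j - i₀ < n₀ by omega),
          if_neg (show ¬ i₀ + (j - i₀) = j' by rw [hii]; exact hne), hii,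
          (hHhole j hj).1]
        rfl
      rw [e1, e2] at hfe
      exact hb hfe.symm
    use m
    set S := {u : List A | u.length = m ∧ IsSubword w u} with hS
    set T := {u : List A | u.length = m ∧ IsRecSubword w u} with hT
    have hSfin : S.Finite := (List.finite_length_eq A m).subset fun u hu => hu.1
    have hTS : T ⊆ S := fun u hu => ⟨hu.1, recSub_isSub w u hu.2⟩
    have himg : v '' ↑H ⊆ S \ T := by
      rintro _ ⟨j, hj, rfl⟩
      refine ⟨⟨hvlen j, ⟨i₀, hvocc j hj⟩⟩, fun hmem => hvnr j hj hmem.2⟩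
    have hcard : (v '' ↑H).ncard = C + 1 := by
      rw [Set.ncard_image_of_injOn hvinj, Set.ncard_coe_finset, hHcard]
    have hle : C + 1 ≤ (S \ T).ncard :=
      hcard ▸ Set.ncard_le_ncard himg hSfin.diff
    have hdiff : (S \ T).ncard = S.ncard - T.ncard :=
      Set.ncard_diff hTS (hSfin.subset hTS)
    show C < S.ncard - T.ncard
    omega
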